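/- Let G be the group with presentation ⟨a, b | aba = bab, a² = b²⟩ (the fundamental group of the affine complement of Zariski's three-cuspidal quartic). Then the commutator subgroup G' = [G,G] is isomorphic to the cyclic group ℤ/3ℤ. Consequently G'/G'' is ℤ-torsion and all higher-order Alexander modules and higher-order degrees δ_n of this group vanish. -/

import Mathlib

/-!
STATEMENT 11: For the group `G = ⟨a, b | aba = bab, a² = b²⟩` (the fundamental group of the
affine complement of Zariski's three-cuspidal quartic), the commutator subgroup `G'` is
isomorphic to `ℤ/3ℤ`.  Consequently `G'/G''` is `ℤ`-torsion (so all higher-order Alexander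
modules and higher-order degrees vanish).
-/

/-- Relators of `⟨a, b | aba = bab, a² = b²⟩`, with `a = of 0` and `b = of 1`. -/
def quarticRels : Set (FreeGroup (Fin 2)) :=
  {FreeGroup.of 0 * FreeGroup.of 1 * FreeGroup.of 0 *
      (FreeGroup.of 1 * FreeGroup.of 0 * FreeGroup.of 1)⁻¹,
    FreeGroup.of 0 ^ 2 * (FreeGroup.of 1 ^ 2)⁻¹}

namespace Quartic

abbrev G := PresentedGroup quarticRels

def a : G := PresentedGroup.of 0
def b : G := PresentedGroup.of 1
def x : G := a * b⁻¹

lemma mk_rel {r : FreeGroup (Fin 2)} (h : r ∈ quarticRels) :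
    PresentedGroup.mk quarticRels r = 1 :=
  (QuotientGroup.eq_one_iff r).2 (Subgroup.subset_normalClosure h)

lemma rel1 : a * b * a = b * a * b := by
  have h := mk_rel (r := FreeGroup.of 0 * FreeGroup.of 1 * FreeGroup.of 0 *
      (FreeGroup.of 1 * FreeGroup.of 0 * FreeGroup.of 1)⁻¹) (Set.mem_insert _ _)
  simp only [map_mul, map_inv] at h
  have : a * b * a * (b * a * b)⁻¹ = 1 := by
    simpa [a, b, PresentedGroup.of] using h
  group at this ⊢
  exact mul_inv_eq_one.mp this

lemma rel2 : a * a = b * b := by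
  have h := mk_rel (r := FreeGroup.of 0 ^ 2 * (FreeGroup.of 1 ^ 2)⁻¹)
      (Set.mem_insert_of_mem _ rfl)
  simp only [map_mul, map_inv, map_pow] at h
  have : a ^ 2 * (b ^ 2)⁻¹ = 1 := by
    simpa [a, b, PresentedGroup.of] using h
  have h2 : a ^ 2 = b ^ 2 := mul_inv_eq_one.mp this
  group at h2 ⊢
  simpa [pow_two] using h2

lemma hax : a * x * a⁻¹ = x⁻¹ := by
  have : a * (a * b⁻¹) * a⁻¹ = (a * a) * b⁻¹ * a⁻¹ := by group
  rw [x, this, rel2]; group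

lemma haxi : a⁻¹ * x * a = x⁻¹ := by
  have e1 : a⁻¹ * (a * b⁻¹) * a = b⁻¹ * (a * a) * a⁻¹ := by group
  rw [x, e1, rel2]; group

lemma key : b⁻¹ * a * b⁻¹ = a⁻¹ * b * a⁻¹ := by
  have e1 : b⁻¹ * a * b⁻¹ = (b * b)⁻¹ * (b * a * b) * (b * b)⁻¹ := by group
  rw [e1, ← rel1, ← rel2]; group

lemma hx3 : x ^ 3 = 1 := by
  have e1 : x ^ 3 = a * (b⁻¹ * a * b⁻¹) * (a * b⁻¹) := by
    rw [pow_succ, pow_succ, pow_one, x]; group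
  rw [e1, key]; group

lemma conjA (m : ℤ) : ∃ j : ℤ, a ^ m * x * a ^ (-m) = x ^ j := by
  induction m using Int.induction_on with
  | zero => exact ⟨1, by simp⟩
  | succ n ih =>
    obtain ⟨j, hj⟩ := ih
    refine ⟨-j, ?_⟩
    have e1 : a ^ ((n : ℤ) + 1) * x * a ^ (-((n : ℤ) + 1))
        = a * (a ^ (n : ℤ) * x * a ^ (-(n : ℤ))) * a⁻¹ := by group
    rw [e1, hj, ← conj_zpow, hax]; group
  | pred n ih =>
    obtain ⟨j, hj⟩ := ih
    refine ⟨-j, ?_⟩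
    have e1 : a ^ (-(n : ℤ) - 1) * x * a ^ (-(-(n : ℤ) - 1))
        = a⁻¹ * (a ^ (-(n : ℤ)) * x * a ^ ((n : ℤ))) * a := by group
    have e2 : a ^ (-(n:ℤ)) * x * a ^ ((n:ℤ)) = x ^ j := by
      have := hj; rwa [neg_neg] at this
    rw [e1, e2]
    have e3 : a⁻¹ * x ^ j * a⁻¹⁻¹ = (a⁻¹ * x * a⁻¹⁻¹) ^ j := by
      rw [← conj_zpow]
    have e4 : a⁻¹ * x ^ j * a = a⁻¹ * x ^ j * a⁻¹⁻¹ := by group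
    rw [e4, e3, show a⁻¹ * x * a⁻¹⁻¹ = x⁻¹ by rw [← haxi]; group]; group

lemma conjA' (m j : ℤ) : ∃ i : ℤ, a ^ m * x ^ j * a ^ (-m) = x ^ i := by
  obtain ⟨i, hi⟩ := conjA m
  refine ⟨i * j, ?_⟩
  have e1 : a ^ m * x ^ j * (a ^ m)⁻¹ = (a ^ m * x * (a ^ m)⁻¹) ^ j := by
    rw [← conj_zpow]
  have e2 : a ^ m * x ^ j * a ^ (-m) = a ^ m * x ^ j * (a ^ m)⁻¹ := by group
  have e3 : a ^ m * x * (a ^ m)⁻¹ = x ^ i := by rw [← hi]; group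
  rw [e2, e1, e3, ← zpow_mul, mul_comm]

/-- The subgroup of elements of the form `x ^ k * a ^ m`. -/
def S : Subgroup G where
  carrier := {g | ∃ k m : ℤ, g = x ^ k * a ^ m}
  one_mem' := ⟨0, 0, by simp⟩
  mul_mem' := by
    rintro g h ⟨k, m, rfl⟩ ⟨j, n, rfl⟩
    obtain ⟨i, hi⟩ := conjA' m j
    refine ⟨k + i, m + n, ?_⟩
    have : x ^ k * a ^ m * (x ^ j * a ^ n)
        = x ^ k * (a ^ m * x ^ j * a ^ (-m)) * a ^ (m + n) := by group
    rw [this, hi, ← zpow_add]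
  inv_mem' := by
    rintro g ⟨k, m, rfl⟩
    obtain ⟨i, hi⟩ := conjA' (-m) (-k)
    refine ⟨i, -m, ?_⟩
    have : (x ^ k * a ^ m)⁻¹ = a ^ (-m) * x ^ (-k) * a ^ (-(-m)) * a ^ (-m) := by group
    rw [this, hi]

lemma hS (g : G) : g ∈ S := by
  have ha : a ∈ S := ⟨0, 1, by simp⟩
  have hb : b ∈ S := ⟨-1, 1, by rw [x]; group⟩
  refine PresentedGroup.generated_by quarticRels S ?_ g
  intro j
  fin_cases j
  · exact ha
  · exact hb

/-- The exponent-sum homomorphism to `ℤ`. -/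
def fZ : G →* Multiplicative ℤ :=
  PresentedGroup.toGroup (f := fun _ => Multiplicative.ofAdd (1 : ℤ)) (by
    intro r hr
    rcases hr with rfl | rfl
    · simp only [map_mul, map_inv, FreeGroup.lift_apply_of]; decide
    · simp only [map_mul, map_inv, map_pow, FreeGroup.lift_apply_of]; decide)

lemma fZ_a : fZ a = Multiplicative.ofAdd 1 := PresentedGroup.toGroup.of _
lemma fZ_b : fZ b = Multiplicative.ofAdd 1 := PresentedGroup.toGroup.of _

/-- The homomorphism onto the symmetric group `S₃`. -/
def π3 : G →* Equiv.Perm (Fin 3) :=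
  PresentedGroup.toGroup
    (f := fun i => if i = 0 then Equiv.swap 0 1 else Equiv.swap 1 2) (by
    intro r hr
    rcases hr with rfl | rfl
    · simp only [map_mul, map_inv, FreeGroup.lift_apply_of]; decide
    · simp only [map_mul, map_inv, map_pow, FreeGroup.lift_apply_of]; decide)

lemma x_ne_one : x ≠ 1 := by
  intro h
  have hx : π3 x = 1 := by rw [h, map_one]
  rw [x, map_mul, map_inv] at hx
  have ha : π3 a = Equiv.swap 0 1 := PresentedGroup.toGroup.of _
  have hb : π3 b = Equiv.swap 1 2 := PresentedGroup.toGroup.of _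
  rw [ha, hb] at hx
  exact absurd hx (by decide)

lemma hab : a⁻¹ * b = x := by
  have e : a⁻¹ * b = (a⁻¹ * (a * b⁻¹) * a)⁻¹ * (a⁻¹ * (a * b⁻¹) * a) * (a⁻¹ * b) := by group
  calc a⁻¹ * b = (a⁻¹ * x * a)⁻¹ := by rw [x]; group
  _ = (x⁻¹)⁻¹ := by rw [haxi]
  _ = x := by group

open scoped commutatorElement

lemma comm_elem : ⁅a, b⁻¹⁆ = x * x := by
  have e : ⁅a, b⁻¹⁆ = (a * b⁻¹) * (a⁻¹ * b) := by
    rw [commutatorElement_def]; group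
  rw [e, hab, x]

lemma x_mem_commutator : x ∈ commutator G := by
  have h1 : ⁅a, b⁻¹⁆ ∈ commutator G := by
    rw [commutator_def]
    exact Subgroup.commutator_mem_commutator (Subgroup.mem_top a) (Subgroup.mem_top b⁻¹)
  have h2 : x = ⁅a, b⁻¹⁆ * ⁅a, b⁻¹⁆ := by
    rw [comm_elem]
    calc x = x ^ 3 * x := by rw [hx3]; group
    _ = x * x * (x * x) := by rw [pow_succ, pow_succ, pow_one, mul_assoc (x*x)]
  rw [h2]
  exact Subgroup.mul_mem _ h1 h1

lemma commutator_eq : commutator G = Subgroup.zpowers x := by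
  apply le_antisymm
  · intro c hc
    obtain ⟨k, m, rfl⟩ := hS c
    have h1 : fZ (x ^ k * a ^ m) = 1 := Abelianization.commutator_subset_ker fZ hc
    have h2 : fZ x = 1 := by
      rw [x, map_mul, map_inv, fZ_a, fZ_b, mul_inv_cancel]
    rw [map_mul, map_zpow, map_zpow, h2, one_zpow, one_mul, fZ_a] at h1
    have hm : m = 0 := by
      have h3 := congrArg Multiplicative.toAdd h1
      simpa using h3
    rw [hm]
    simpa using Subgroup.zpow_mem _ (Subgroup.mem_zpowers x) k
  · exact Subgroup.zpowers_le.mpr x_mem_commutator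

/-- The canonical map `ℤ/3 → G` sending `1` to `x`. -/
def φ : Multiplicative (ZMod 3) →* G :=
  AddMonoidHom.toMultiplicativeLeft
    (ZMod.lift 3 ⟨zmultiplesHom (Additive G) (Additive.ofMul x), by
      simp only [zmultiplesHom_apply]
      have h : (((3:ℕ):ℤ) • Additive.ofMul x).toMul = x ^ ((3:ℕ):ℤ) := toMul_zsmul _ _
      have h2 : x ^ ((3:ℕ):ℤ) = 1 := by rw [zpow_natCast, hx3]
      exact Additive.toMul.injective (h.trans h2)⟩)

lemma φ_int (k : ℤ) : φ (Multiplicative.ofAdd (k : ZMod 3)) = x ^ k := by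
  simp only [φ, AddMonoidHom.coe_toMultiplicativeLeft, Function.comp_apply, toAdd_ofAdd,
    ZMod.lift_coe, zmultiplesHom_apply]
  rw [← ofMul_zpow]
  rfl

lemma φ_inj : Function.Injective φ := by
  have h1 : φ (Multiplicative.ofAdd (1 : ZMod 3)) = x := by
    have := φ_int 1; simpa using this
  have h2 : φ (Multiplicative.ofAdd (2 : ZMod 3)) = x ^ (2:ℤ) := by
    have := φ_int 2; simpa using this
  have hx2 : x ^ (2:ℤ) ≠ 1 := by
    intro h
    apply x_ne_one
    calc x = x ^ 3 * (x ^ (2:ℤ))⁻¹ := by group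
    _ = 1 := by rw [hx3, h]; group
  apply (injective_iff_map_eq_one _).mpr
  have hall : ∀ s : Multiplicative (ZMod 3), s = Multiplicative.ofAdd (0 : ZMod 3) ∨
      s = Multiplicative.ofAdd (1 : ZMod 3) ∨ s = Multiplicative.ofAdd (2 : ZMod 3) := by decide
  intro s hs
  rcases hall s with rfl | rfl | rfl
  · rfl
  · rw [h1] at hs; exact absurd hs x_ne_one
  · rw [h2] at hs; exact absurd hs hx2

/-- `ℤ/3 ≃* ⟨x⟩`. -/
noncomputable def e3 : Multiplicative (ZMod 3) ≃* Subgroup.zpowers x := by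
  have hmem : ∀ s, φ s ∈ Subgroup.zpowers x := by
    intro s
    obtain ⟨k, rfl⟩ : ∃ k : ℤ, Multiplicative.ofAdd ((k : ZMod 3)) = s := by
      obtain ⟨k, hk⟩ := ZMod.intCast_surjective (n := 3) s.toAdd
      exact ⟨k, by rw [hk]; rfl⟩
    rw [φ_int]
    exact Subgroup.zpow_mem _ (Subgroup.mem_zpowers x) k
  refine MulEquiv.ofBijective (φ.codRestrict (Subgroup.zpowers x) hmem) ⟨?_, ?_⟩
  · intro s t hst
    exact φ_inj (congrArg Subtype.val hst)
  · rintro ⟨g, k, rfl⟩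
    refine ⟨Multiplicative.ofAdd ((k : ZMod 3)), ?_⟩
    ext
    simpa using φ_int k

/-- The commutator subgroup is `ℤ/3`. -/
noncomputable def commEquiv : ↥(commutator G) ≃* Multiplicative (ZMod 3) :=
  (MulEquiv.subgroupCongr commutator_eq).trans e3.symm

end Quartic

/-- The fundamental group of the complement of Zariski's three-cuspidal quartic has
commutator subgroup `ℤ/3ℤ`; in particular `G'/G''` is torsion. -/
theorem three_cuspidal_quartic_commutator :
    Nonempty (↥(commutator (PresentedGroup quarticRels)) ≃* Multiplicative (ZMod 3)) ∧
      ∀ x : Abelianization ↥(commutator (PresentedGroup quarticRels)), IsOfFinOrder x := by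
  refine ⟨⟨Quartic.commEquiv⟩, ?_⟩
  have hfin : Finite ↥(commutator (PresentedGroup quarticRels)) :=
    Finite.of_equiv _ Quartic.commEquiv.symm.toEquiv
  have hfin2 : Finite (Abelianization ↥(commutator (PresentedGroup quarticRels))) :=
    Finite.of_surjective (Abelianization.of)
      (fun y => QuotientGroup.induction_on y fun g => ⟨g, rfl⟩)
  exact fun x => isOfFinOrder_of_finite x
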